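/- For a portfolio whose loss tail satisfies P(S < −x) ∼ λ₋ (1 − Φ(√2 (x/χ̂)^{c/2})) as x → ∞, the ratio of recurrence times of losses VaR = β·VaR* and VaR* satisfies ln(T/T₀) = (β^c − 1)(VaR*/χ̂)^c + O(ln β) as VaR*/χ̂ → ∞, where T = 1/P(S < −VaR) and T₀ = 1/P(S < −VaR*). -/

import Mathlib

open Filter MeasureTheory ProbabilityTheory
open Real Set

noncomputable def phiG (t : ℝ) : ℝ := (Real.sqrt (2 * Real.pi))⁻¹ * Real.exp (-t^2/2)
noncomputable def QG (u : ℝ) : ℝ := ∫ t in Set.Ioi u, phiG t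

/-- Standard normal cumulative distribution function `Φ`. -/
noncomputable def stdNormalCdf (u : ℝ) : ℝ := (gaussianReal 0 1 (Set.Iic u)).toReal

lemma phiG_pos (t : ℝ) : 0 < phiG t := by
  unfold phiG; positivity

lemma phiG_eq (t : ℝ) : phiG t = gaussianPDFReal 0 1 t := by
  simp [phiG, gaussianPDFReal]

lemma one_sub_cdf (u : ℝ) : 1 - stdNormalCdf u = QG u := by
  have h1 : (gaussianReal 0 1) (Set.Iic u)ᶜ = 1 - (gaussianReal 0 1) (Set.Iic u) :=
    prob_compl_eq_one_sub measurableSet_Iic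
  have h2 : (Set.Iic u)ᶜ = Set.Ioi u := Set.compl_Iic
  have h3 : (gaussianReal 0 1) (Set.Ioi u) = ENNReal.ofReal (∫ x in Set.Ioi u, gaussianPDFReal 0 1 x) :=
    gaussianReal_apply_eq_integral 0 one_ne_zero _
  have hle : (gaussianReal 0 1) (Set.Iic u) ≤ 1 := prob_le_one
  have : QG u = ((gaussianReal 0 1) (Set.Ioi u)).toReal := by
    rw [h3, ENNReal.toReal_ofReal]
    · unfold QG; simp_rw [phiG_eq]
    · exact setIntegral_nonneg measurableSet_Ioi (fun x _ => gaussianPDFReal_nonneg 0 1 x)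
  rw [this, ← h2, h1, stdNormalCdf]
  rw [ENNReal.toReal_sub_of_le hle (by simp)]
  simp

lemma integrable_phiG : Integrable phiG := by
  have h : Integrable (fun t : ℝ => Real.exp (-(1/2 : ℝ) * t^2)) := integrable_exp_neg_mul_sq (by norm_num)
  have := h.const_mul (Real.sqrt (2*Real.pi))⁻¹
  refine this.congr (Eventually.of_forall fun t => ?_)
  unfold phiG; ring_nf

lemma integrable_mul_phiG : Integrable (fun t : ℝ => t * phiG t) := by
  have h : Integrable (fun t : ℝ => t ^ (1:ℝ) * Real.exp (-(1/2 : ℝ) * t^2)) :=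
    integrable_rpow_mul_exp_neg_mul_sq (by norm_num) (by norm_num)
  have := h.const_mul (Real.sqrt (2*Real.pi))⁻¹
  refine this.congr (Eventually.of_forall fun t => ?_)
  simp only [Real.rpow_one, phiG]; ring

lemma continuous_phiG : Continuous phiG := by
  unfold phiG; fun_prop

lemma hasDerivAt_neg_phiG (t : ℝ) : HasDerivAt (fun s => -phiG s) (t * phiG t) t := by
  have h1 : HasDerivAt (fun s : ℝ => -s^2/2) (-t) t := by
    have := ((hasDerivAt_pow 2 t).neg).div_const 2
    simpa using this.congr_deriv (by push_cast; ring)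
  have h2 := (h1.exp).const_mul (Real.sqrt (2*Real.pi))⁻¹
  have := h2.neg
  refine this.congr_deriv ?_
  unfold phiG; ring

lemma tendsto_phiG_atTop : Tendsto phiG atTop (nhds 0) := by
  have h0 : Tendsto (fun t : ℝ => t^2/2) atTop atTop :=
    (tendsto_pow_atTop two_ne_zero).atTop_div_const (by norm_num)
  have h1 : Tendsto (fun t : ℝ => -t^2/2) atTop atBot := by
    have := tendsto_neg_atBot_iff.mpr h0
    refine this.congr fun t => by ring
  have h2 := ((Real.tendsto_exp_atBot).comp h1).const_mul (Real.sqrt (2*Real.pi))⁻¹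
  rw [mul_zero] at h2
  exact h2

lemma integral_mul_phiG (u : ℝ) : ∫ t in Set.Ioi u, t * phiG t = phiG u := by
  have h := integral_Ioi_of_hasDerivAt_of_tendsto
    (f := fun s => -phiG s) (f' := fun t => t * phiG t) (a := u) (m := 0)
    (continuous_phiG.neg.continuousWithinAt)
    (fun x _ => hasDerivAt_neg_phiG x)
    (integrable_mul_phiG.integrableOn)
    (by simpa using tendsto_phiG_atTop.neg)
  simpa using h

lemma QG_le {u : ℝ} (hu : 0 < u) : QG u ≤ phiG u / u := by
  have hmono : QG u ≤ ∫ t in Set.Ioi u, (t * phiG t) / u := by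
    apply setIntegral_mono_on integrable_phiG.integrableOn
      (integrable_mul_phiG.integrableOn.div_const u) measurableSet_Ioi
    intro t ht
    have htu : u ≤ t := le_of_lt ht
    rw [le_div_iff₀ hu]
    nlinarith [phiG_pos t, le_of_lt (Set.mem_Ioi.mp ht), hu]
  calc QG u ≤ ∫ t in Set.Ioi u, (t * phiG t) / u := hmono
    _ = (∫ t in Set.Ioi u, t * phiG t) / u := by rw [integral_div]
    _ = phiG u / u := by rw [integral_mul_phiG]

/-- The auxiliary function for the lower Mills bound. -/
noncomputable def hG (t : ℝ) : ℝ := t / (1 + t^2) * phiG t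
/-- Its derivative. -/
noncomputable def hG' (t : ℝ) : ℝ := phiG t * (1 - 2*t^2 - t^4) / (1 + t^2)^2

lemma hasDerivAt_hG (t : ℝ) : HasDerivAt hG (hG' t) t := by
  have hne : (1 + t^2) ≠ 0 := by positivity
  have h1 : HasDerivAt (fun s : ℝ => s / (1 + s^2)) ((1 - t^2)/(1 + t^2)^2) t := by
    have hnum : HasDerivAt (fun s : ℝ => s) 1 t := hasDerivAt_id t
    have hden : HasDerivAt (fun s : ℝ => 1 + s^2) (2*t) t := by
      simpa using ((hasDerivAt_pow 2 t).const_add 1)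
    have := hnum.div hden hne
    refine this.congr_deriv ?_
    field_simp; ring
  have hphi : HasDerivAt phiG (-(t * phiG t)) t := by
    have := (hasDerivAt_neg_phiG t).neg
    simpa [Pi.neg_def] using this
  have := h1.mul hphi
  refine this.congr_deriv ?_
  unfold hG'
  field_simp
  ring

lemma abs_hG'_le (t : ℝ) : |hG' t| ≤ phiG t := by
  unfold hG'
  rw [abs_div, abs_mul, abs_of_pos (phiG_pos t), abs_of_pos (by positivity : (0:ℝ) < (1+t^2)^2)]
  rw [div_le_iff₀ (by positivity : (0:ℝ) < (1+t^2)^2)]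
  have h1 : |1 - 2*t^2 - t^4| ≤ (1+t^2)^2 := by
    rw [abs_le]; constructor <;> nlinarith [sq_nonneg t, sq_nonneg (t^2)]
  calc phiG t * |1 - 2*t^2 - t^4| ≤ phiG t * (1+t^2)^2 :=
        mul_le_mul_of_nonneg_left h1 (phiG_pos t).le
    _ = phiG t * (1+t^2)^2 := rfl

lemma integrableOn_hG' (u : ℝ) : IntegrableOn hG' (Set.Ioi u) := by
  refine Integrable.mono integrable_phiG.integrableOn ?_ ?_
  · have : Continuous hG' := by
      unfold hG'
      exact (continuous_phiG.mul (by continuity)).div (by continuity) (fun t => by positivity)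
    exact this.aestronglyMeasurable.restrict
  · refine Eventually.of_forall fun t => ?_
    rw [Real.norm_eq_abs, Real.norm_eq_abs, abs_of_pos (phiG_pos t)]
    exact abs_hG'_le t

lemma tendsto_hG_atTop : Tendsto hG atTop (nhds 0) := by
  apply squeeze_zero' (g := phiG)
  · filter_upwards [eventually_ge_atTop (0:ℝ)] with t ht
    unfold hG
    exact mul_nonneg (div_nonneg ht (by positivity)) (phiG_pos t).le
  · filter_upwards [eventually_ge_atTop (0:ℝ)] with t ht
    unfold hG
    have h1 : t / (1 + t^2) ≤ 1 := by
      rw [div_le_one (by positivity)]; nlinarith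
    nlinarith [phiG_pos t, mul_le_mul_of_nonneg_right h1 (phiG_pos t).le]
  · exact tendsto_phiG_atTop

lemma le_QG {u : ℝ} (hu : 0 < u) : u / (1 + u^2) * phiG u ≤ QG u := by
  have hftc : ∫ t in Set.Ioi u, hG' t = 0 - hG u := by
    apply integral_Ioi_of_hasDerivAt_of_tendsto
      ((hasDerivAt_hG u).continuousAt.continuousWithinAt)
      (fun x _ => hasDerivAt_hG x) (integrableOn_hG' u) tendsto_hG_atTop
  have hmono : ∫ t in Set.Ioi u, -hG' t ≤ QG u := by
    apply setIntegral_mono_on (integrableOn_hG' u).neg integrable_phiG.integrableOn measurableSet_Ioi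
    intro t _
    simp only [Pi.neg_apply]
    have := abs_hG'_le t
    rw [abs_le] at this
    linarith [this.1]
  have : ∫ t in Set.Ioi u, -hG' t = hG u := by
    rw [integral_neg, hftc]; ring
  rw [this] at hmono
  unfold hG at hmono
  exact hmono

lemma QG_pos {u : ℝ} (hu : 0 < u) : 0 < QG u := by
  have := le_QG hu
  have h2 : 0 < u / (1 + u^2) * phiG u :=
    mul_pos (div_pos hu (by positivity)) (phiG_pos u)
  linarith

lemma log_phiG (t : ℝ) : Real.log (phiG t) = Real.log (Real.sqrt (2*Real.pi))⁻¹ - t^2/2 := by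
  unfold phiG
  rw [Real.log_mul (by positivity) (Real.exp_ne_zero _), Real.log_exp]
  ring

lemma tendsto_logQG : Tendsto (fun u => Real.log (QG u) + u^2/2 + Real.log u) atTop
    (nhds (Real.log (Real.sqrt (2*Real.pi))⁻¹)) := by
  set C := Real.log (Real.sqrt (2*Real.pi))⁻¹ with hC
  have hlow : Tendsto (fun u : ℝ => C + Real.log (u^2/(1+u^2))) atTop (nhds C) := by
    have h1 : Tendsto (fun u : ℝ => u^2/(1+u^2)) atTop (nhds 1) := by
      have h2 : Tendsto (fun u : ℝ => (1+u^2)/u^2) atTop (nhds 1) := by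
        have h3 : Tendsto (fun u : ℝ => (u^2)⁻¹ + 1) atTop (nhds (0+1)) :=
          Tendsto.add_const 1 (tendsto_inv_atTop_zero.comp (tendsto_pow_atTop two_ne_zero))
        rw [zero_add] at h3
        apply h3.congr'
        filter_upwards [eventually_gt_atTop (0:ℝ)] with u hu
        field_simp
      have := h2.inv₀ one_ne_zero
      rw [inv_one] at this
      apply this.congr'
      filter_upwards [eventually_gt_atTop (0:ℝ)] with u hu
      rw [inv_div]
    have h4 := (Real.continuousAt_log one_ne_zero).tendsto.comp h1
    rw [Real.log_one] at h4
    simpa using (tendsto_const_nhds (x := C)).add h4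
  apply tendsto_of_tendsto_of_tendsto_of_le_of_le' hlow tendsto_const_nhds
  · filter_upwards [eventually_gt_atTop (0:ℝ)] with u hu
    have h5 := le_QG hu
    have h6 : Real.log (u/(1+u^2) * phiG u) ≤ Real.log (QG u) :=
      Real.log_le_log (mul_pos (div_pos hu (by positivity)) (phiG_pos u)) h5
    rw [Real.log_mul (by positivity) (phiG_pos u).ne', log_phiG,
      Real.log_div hu.ne' (by positivity)] at h6
    have h7 : Real.log (u^2/(1+u^2)) = 2 * Real.log u - Real.log (1+u^2) := by
      rw [Real.log_div (by positivity) (by positivity), Real.log_pow]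
      push_cast; ring
    rw [h7]
    linarith
  · filter_upwards [eventually_gt_atTop (0:ℝ)] with u hu
    have h5 := QG_le hu
    have h6 : Real.log (QG u) ≤ Real.log (phiG u / u) :=
      Real.log_le_log (QG_pos hu) h5
    rw [Real.log_div (phiG_pos u).ne' hu.ne', log_phiG] at h6
    linarith

theorem stmt_17 (P : ℝ → ℝ) (c χ lam β : ℝ)
    (hc : 0 < c) (hχ : 0 < χ) (hlam : 0 < lam) (hβ : 1 < β)
    (hP : Tendsto (fun x => P x / (lam * (1 - stdNormalCdf (Real.sqrt 2 * (x/χ) ^ (c/2)))))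
      atTop (nhds 1)) :
    ∃ K > 0, ∀ᶠ x in atTop,
      |Real.log (P x / P (β * x)) - (β ^ c - 1) * (x/χ) ^ c| ≤ K * Real.log β := by
  have hβ0 : (0:ℝ) < β := lt_trans one_pos hβ
  have hlogβ : 0 < Real.log β := Real.log_pos hβ
  set u : ℝ → ℝ := fun x => Real.sqrt 2 * (x/χ) ^ (c/2) with hu_def
  set R : ℝ → ℝ := fun x => P x / (lam * QG (u x)) with hR_def
  have hP' : Tendsto R atTop (nhds 1) := by
    apply hP.congr
    intro x
    simp only [hR_def, hu_def, one_sub_cdf]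
  -- u tends to infinity
  have hu_tendsto : Tendsto u atTop atTop := by
    apply Tendsto.const_mul_atTop (by positivity : (0:ℝ) < Real.sqrt 2)
    exact (tendsto_rpow_atTop (by positivity : 0 < c/2)).comp
      (tendsto_id.atTop_div_const hχ)
  have hβx : Tendsto (fun x : ℝ => β * x) atTop atTop :=
    Tendsto.const_mul_atTop hβ0 tendsto_id
  -- log R → 0
  have hlogR : Tendsto (fun x => Real.log (R x)) atTop (nhds 0) := by
    have := (Real.continuousAt_log one_ne_zero).tendsto.comp hP'
    rwa [Real.log_one] at this
  have hlogRβ : Tendsto (fun x => Real.log (R (β * x))) atTop (nhds 0) := hlogR.comp hβx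
  set g : ℝ → ℝ := fun v => Real.log (QG v) + v^2/2 + Real.log v with hg_def
  set C := Real.log (Real.sqrt (2*Real.pi))⁻¹ with hC
  have hg1 : Tendsto (fun x => g (u x)) atTop (nhds C) := tendsto_logQG.comp hu_tendsto
  have hg2 : Tendsto (fun x => g (u (β * x))) atTop (nhds C) :=
    tendsto_logQG.comp (hu_tendsto.comp hβx)
  set E' : ℝ → ℝ := fun x => Real.log (R x) - Real.log (R (β*x))
      + (g (u x) - g (u (β*x))) + (c/2) * Real.log β with hE'_def
  have hE' : Tendsto E' atTop (nhds ((c/2) * Real.log β)) := by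
    have := ((hlogR.sub hlogRβ).add (hg1.sub hg2)).add_const ((c/2) * Real.log β)
    simpa using this
  have habs : Tendsto (fun x => |E' x|) atTop (nhds ((c/2) * Real.log β)) := by
    have := hE'.abs
    rwa [abs_of_pos (by positivity)] at this
  have hlt : (c/2) * Real.log β < c * Real.log β := by nlinarith
  have hev1 : ∀ᶠ x in atTop, |E' x| ≤ c * Real.log β := by
    filter_upwards [habs.eventually_lt_const hlt] with x hx using hx.le
  -- eventual equality
  have hRpos : ∀ᶠ x in atTop, 0 < R x := hP'.eventually_const_lt one_pos
  have hRβpos : ∀ᶠ x in atTop, 0 < R (β * x) := hβx.eventually hRpos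
  -- the key eventual equality
  have hkey : ∀ᶠ x in atTop,
      Real.log (P x / P (β * x)) - (β ^ c - 1) * (x/χ) ^ c = E' x := by
    filter_upwards [hRpos, hRβpos, eventually_gt_atTop (0:ℝ)] with x hRx hRβx hx
    have hxχ : 0 < x/χ := div_pos hx hχ
    have hux : 0 < u x := by
      simp only [hu_def]
      positivity
    have huβx : 0 < u (β * x) := by
      have : 0 < (β*x)/χ := div_pos (mul_pos hβ0 hx) hχ
      simp only [hu_def]
      positivity
    have hQx : 0 < QG (u x) := QG_pos hux
    have hQβx : 0 < QG (u (β*x)) := QG_pos huβx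
    have hPx : 0 < P x := by
      have : 0 < P x / (lam * QG (u x)) := hRx
      have hd : 0 < lam * QG (u x) := mul_pos hlam hQx
      exact (div_pos_iff.mp this).resolve_right (fun h => absurd hd (not_lt.mpr h.2.le)) |>.1
    have hPβx : 0 < P (β*x) := by
      have : 0 < P (β*x) / (lam * QG (u (β*x))) := hRβx
      have hd : 0 < lam * QG (u (β*x)) := mul_pos hlam hQβx
      exact (div_pos_iff.mp this).resolve_right (fun h => absurd hd (not_lt.mpr h.2.le)) |>.1
    -- scaling identities
    have hscale : u (β * x) = β ^ (c/2) * u x := by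
      simp only [hu_def]
      rw [show (β*x)/χ = β * (x/χ) by ring,
        Real.mul_rpow hβ0.le hxχ.le]
      ring
    have hsq : (u x)^2/2 = (x/χ) ^ c := by
      simp only [hu_def]
      rw [mul_pow, Real.sq_sqrt (by norm_num : (0:ℝ) ≤ 2),
        ← Real.rpow_natCast ((x/χ) ^ (c/2)) 2, ← Real.rpow_mul hxχ.le]
      norm_num
    have hsqβ : (u (β*x))^2/2 = β ^ c * (x/χ) ^ c := by
      rw [hscale, mul_pow, ← Real.rpow_natCast (β ^ (c/2)) 2, ← Real.rpow_mul hβ0.le]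
      norm_num
      linear_combination β ^ c * hsq
    have hlogu : Real.log (u (β*x)) = (c/2) * Real.log β + Real.log (u x) := by
      rw [hscale, Real.log_mul (by positivity) hux.ne', Real.log_rpow hβ0]
    -- expand logs
    have hPdiv : Real.log (P x / P (β*x)) = Real.log (P x) - Real.log (P (β*x)) :=
      Real.log_div hPx.ne' hPβx.ne'
    have hPx_eq : Real.log (P x) = Real.log (R x) + Real.log lam + Real.log (QG (u x)) := by
      have : P x = R x * (lam * QG (u x)) := by
        simp only [hR_def]
        field_simp
      rw [this, Real.log_mul hRx.ne' (by positivity), Real.log_mul hlam.ne' hQx.ne']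
      ring
    have hPβx_eq : Real.log (P (β*x)) = Real.log (R (β*x)) + Real.log lam
        + Real.log (QG (u (β*x))) := by
      have : P (β*x) = R (β*x) * (lam * QG (u (β*x))) := by
        simp only [hR_def]
        field_simp
      rw [this, Real.log_mul hRβx.ne' (by positivity), Real.log_mul hlam.ne' hQβx.ne']
      ring
    have hgx : Real.log (QG (u x)) = g (u x) - (u x)^2/2 - Real.log (u x) := by
      simp only [hg_def]; ring
    have hgβx : Real.log (QG (u (β*x))) = g (u (β*x)) - (u (β*x))^2/2 - Real.log (u (β*x)) := by
      simp only [hg_def]; ring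
    rw [hPdiv, hPx_eq, hPβx_eq, hgx, hgβx, hsq, hsqβ, hlogu]
    simp only [hE'_def]
    ring
  refine ⟨c, hc, ?_⟩
  filter_upwards [hkey, hev1] with x h1 h2
  rw [h1]
  exact h2
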